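/- Let φ be the standard normal density, let f(x) = 2φ(x) be the half-normal density, and let f_h(x) = φ(x−h) + φ(x+h) be the folded normal density with location parameter h. Then for all x > 0 and all h ∈ ℝ, f_h′(x)·f(x) − f′(x)·f_h(x) = 2φ(x)·φ(x+h)·h·(e^{2xh} − 1) ≥ 0. -/

import Mathlib

/-- The standard normal density φ(x) = (2π)^{-1/2} exp(-x²/2). -/
noncomputable def stdNormalPdf (x : ℝ) : ℝ :=
  (Real.sqrt (2 * Real.pi))⁻¹ * Real.exp (-x ^ 2 / 2)

lemma hasDerivAt_stdNormalPdf (x : ℝ) :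
    HasDerivAt stdNormalPdf (-x * stdNormalPdf x) x := by
  have h1 : HasDerivAt (fun y : ℝ => -y ^ 2 / 2) (-x) x := by
    have := ((hasDerivAt_pow 2 x).neg).div_const 2
    exact this.congr_deriv (by norm_num; ring)
  have h2 := (h1.exp).const_mul (Real.sqrt (2 * Real.pi))⁻¹
  exact h2.congr_deriv (by unfold stdNormalPdf; ring)

lemma stdNormalPdf_pos (x : ℝ) : 0 < stdNormalPdf x := by
  unfold stdNormalPdf
  positivity

/-- with the half-normal density f(x) = 2φ(x) and the folded normal density
f_h(x) = φ(x−h) + φ(x+h), for all x > 0 and all h ∈ ℝ,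
f_h′(x)·f(x) − f′(x)·f_h(x) = 2φ(x)·φ(x+h)·h·(e^{2xh} − 1) ≥ 0. -/
theorem stmt_3 (h : ℝ) (x : ℝ) (hx : 0 < x) :
    deriv (fun y => stdNormalPdf (y - h) + stdNormalPdf (y + h)) x * (2 * stdNormalPdf x) -
        deriv (fun y => 2 * stdNormalPdf y) x * (stdNormalPdf (x - h) + stdNormalPdf (x + h)) =
      2 * stdNormalPdf x * stdNormalPdf (x + h) * h * (Real.exp (2 * x * h) - 1) ∧
    0 ≤ 2 * stdNormalPdf x * stdNormalPdf (x + h) * h * (Real.exp (2 * x * h) - 1) := by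
  have d1 : HasDerivAt (fun y => stdNormalPdf (y - h) + stdNormalPdf (y + h))
      (-(x - h) * stdNormalPdf (x - h) + -(x + h) * stdNormalPdf (x + h)) x := by
    have a := (hasDerivAt_stdNormalPdf (x - h)).comp x
      ((hasDerivAt_id x).sub_const h)
    have b := (hasDerivAt_stdNormalPdf (x + h)).comp x
      ((hasDerivAt_id x).add_const h)
    exact (a.add b).congr_deriv (by ring)
  have d2 : HasDerivAt (fun y => 2 * stdNormalPdf y) (2 * (-x * stdNormalPdf x)) x :=
    (hasDerivAt_stdNormalPdf x).const_mul 2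
  rw [d1.deriv, d2.deriv]
  have key : stdNormalPdf (x - h) = stdNormalPdf (x + h) * Real.exp (2 * x * h) := by
    unfold stdNormalPdf
    rw [mul_assoc, ← Real.exp_add]
    ring_nf
  constructor
  · rw [key]; ring
  · have hφ := (stdNormalPdf_pos x).le
    have hφ' := (stdNormalPdf_pos (x + h)).le
    have : 0 ≤ h * (Real.exp (2 * x * h) - 1) := by
      rcases le_or_gt h 0 with hh | hh
      · have : Real.exp (2 * x * h) ≤ 1 := by
          rw [Real.exp_le_one_iff]; nlinarith
        nlinarith
      · apply mul_nonneg hh.le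
        simp only [sub_nonneg, Real.one_le_exp_iff]
        positivity
      
    nlinarith [mul_nonneg hφ hφ']
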